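/- Let a bipartite graph with left part L, right part R, and neighborhood map N : L → Finset R satisfy: every subset X ⊆ L with #X ≤ s has #N(X) ≥ #X. Process any sequence of at most s pairwise distinct elements of L one at a time by the greedy strategy: maintain the set U of already used right vertices (initially empty); when an element x arrives, if N(x) ⊄ U then match x to some element of N(x) \ U and add it to U (x is served), and otherwise x is rejected. Then at the end of the sequence the number of rejected elements is at most the number of served elements; in particular, at most half of the processed elements are rejected. -/

import Mathlib

/-- One step of the greedy on-line matching strategy.  The state is a triple
`(U, rej, srv)` where `U` is the set of already used right vertices, `rej`
the number of rejected elements and `srv` the number of served elements.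
When `x` arrives, if `N x ⊄ U` then `x` is matched to a chosen element of
`N x \ U` (which is added to `U`) and served; otherwise `x` is rejected. -/
def greedyStep {L R : Type*} [DecidableEq R] (N : L → Finset R)
    (choose : ∀ t : Finset R, t.Nonempty → R)
    (st : Finset R × ℕ × ℕ) (x : L) : Finset R × ℕ × ℕ :=
  if h : (N x \ st.1).Nonempty then
    (insert (choose (N x \ st.1) h) st.1, st.2.1, st.2.2 + 1)
  else
    (st.1, st.2.1 + 1, st.2.2)

/-- The result of processing a list of left vertices (in order) by the greedy
strategy, starting from the empty used set and zero counters. -/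
def greedyRun {L R : Type*} [DecidableEq R] (N : L → Finset R)
    (choose : ∀ t : Finset R, t.Nonempty → R) (l : List L) : Finset R × ℕ × ℕ :=
  l.foldl (greedyStep N choose) (∅, 0, 0)

lemma greedy_invariant {L R : Type*} [DecidableEq L] [DecidableEq R]
    (N : L → Finset R) (choose : ∀ t : Finset R, t.Nonempty → R)
    (hchoose : ∀ (t : Finset R) (ht : t.Nonempty), choose t ht ∈ t)
    (l : List L) (hnd : l.Nodup) :
    ∃ X : Finset L, X ⊆ l.toFinset ∧ X.card = (greedyRun N choose l).2.1 ∧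
      X.biUnion N ⊆ (greedyRun N choose l).1 ∧
      (greedyRun N choose l).1.card = (greedyRun N choose l).2.2 ∧
      (greedyRun N choose l).2.1 + (greedyRun N choose l).2.2 = l.length := by
  induction l using List.reverseRecOn with
  | nil => exact ⟨∅, by simp [greedyRun]⟩
  | append_singleton l x ih =>
    have hnd' : l.Nodup := (List.nodup_append.mp hnd).1
    have hxl : x ∉ l := by
      intro hx
      exact (List.nodup_append.mp hnd).2.2 x hx x (List.mem_singleton_self x) rfl
    obtain ⟨X, hXsub, hXcard, hXN, hU, hsum⟩ := ih hnd'
    have hrun : greedyRun N choose (l ++ [x]) =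
        greedyStep N choose (greedyRun N choose l) x := by
      simp [greedyRun, List.foldl_append]
    set st := greedyRun N choose l with hst
    by_cases h : (N x \ st.1).Nonempty
    · have hrun' : greedyRun N choose (l ++ [x]) =
          (insert (choose (N x \ st.1) h) st.1, st.2.1, st.2.2 + 1) := by
        rw [hrun, greedyStep, dif_pos h]
      rw [hrun']
      refine ⟨X, ?_, hXcard, hXN.trans (Finset.subset_insert _ _), ?_, ?_⟩
      · exact hXsub.trans (by simp [List.toFinset_append, Finset.subset_union_left])
      · have hc : choose (N x \ st.1) h ∉ st.1 :=
          fun hc => (Finset.mem_sdiff.mp (hchoose _ h)).2 hc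
        simp [Finset.card_insert_of_notMem hc, hU]
      · simp only [List.length_append, List.length_singleton]
        omega
    · have hNx : N x ⊆ st.1 := by
        rw [Finset.not_nonempty_iff_eq_empty, Finset.sdiff_eq_empty_iff_subset] at h
        exact h
      have hrun' : greedyRun N choose (l ++ [x]) = (st.1, st.2.1 + 1, st.2.2) := by
        rw [hrun, greedyStep, dif_neg h]
      rw [hrun']
      refine ⟨insert x X, ?_, ?_, ?_, hU, ?_⟩
      · intro a ha
        rcases Finset.mem_insert.mp ha with rfl | ha
        · simp
        · simp only [List.toFinset_append, Finset.mem_union]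
          exact Or.inl (hXsub ha)
      · have hx : x ∉ X := fun hx => hxl (List.mem_toFinset.mp (hXsub hx))
        simp [Finset.card_insert_of_notMem hx, hXcard]
      · intro a ha
        simp only [Finset.mem_biUnion, Finset.mem_insert] at ha
        obtain ⟨b, hb, hab⟩ := ha
        rcases hb with rfl | hb
        · exact hNx hab
        · exact hXN (Finset.mem_biUnion.mpr ⟨b, hb, hab⟩)
      · simp only [List.length_append, List.length_singleton]
        omega

theorem greedy_rejects_at_most_half {L R : Type*} [DecidableEq R]
    (N : L → Finset R) (s : ℕ)
    (hall : ∀ X : Finset L, X.card ≤ s → X.card ≤ (X.biUnion N).card)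
    (choose : ∀ t : Finset R, t.Nonempty → R)
    (hchoose : ∀ (t : Finset R) (ht : t.Nonempty), choose t ht ∈ t)
    (l : List L) (hnd : l.Nodup) (hlen : l.length ≤ s) :
    (greedyRun N choose l).2.1 ≤ (greedyRun N choose l).2.2 ∧
      2 * (greedyRun N choose l).2.1 ≤ l.length := by
  classical
  obtain ⟨X, hXsub, hXcard, hXN, hU, hsum⟩ := greedy_invariant N choose hchoose l hnd
  have h1 : X.card ≤ (X.biUnion N).card := hall X (by omega)
  have h2 : (X.biUnion N).card ≤ (greedyRun N choose l).1.card :=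
    Finset.card_le_card hXN
  constructor <;> omega
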